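/- Let ρ, ρ₁, ρ₂ be finite-dimensional unitary representations of SO(d), let C = C^{(ρ,ρ₁,ρ₂)} ∈ ℂ^{d_{ρ₁}d_{ρ₂} × d_ρ} be the block of a unitary Clebsch–Gordan matrix satisfying (ρ₁(R) ⊗ ρ₂(R)) C = C ρ(R) for all R ∈ SO(d), and for each 1 ≤ m ≤ d_ρ let C̃_m ∈ ℂ^{d_{ρ₂} × d_{ρ₁}} be defined by vec(C̃_m) = (C_{·,m})*. Suppose a filter K : ℤ^d → ℂ^{d_ρ × d_{ρ₁}} has rows [K(y)]_{m,·} = (1/N) Σ_{ρ₂} Σ_r w_r^{(ρ,ρ₁,ρ₂)} M_r^{(ρ₂)}(y)^T C̃_m^{(ρ,ρ₁,ρ₂)} for vectors M_r^{(ρ₂)}(y) ∈ ℂ^{d_{ρ₂}} and scalars w_r. Then for every R ∈ SO(d) and y, (1/N) Σ_{ρ₂} Σ_r w_r^{(ρ,ρ₁,ρ₂)} M_r^{(ρ₂)}(y)^T ρ₂(R)^T C̃_m^{(ρ,ρ₁,ρ₂)} = [ρ(R) K(y) ρ₁(R)†]_{m,·}. -/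

import Mathlib

open Matrix
open scoped Kronecker

/-- The determinant as a monoid homomorphism on the orthogonal group. -/
noncomputable def detHom (d : ℕ) : ↥(Matrix.orthogonalGroup (Fin d) ℝ) →* ℝ where
  toFun A := Matrix.det (A : Matrix (Fin d) (Fin d) ℝ)
  map_one' := by simp
  map_mul' A B := by simp

/-- The special orthogonal group `SO(d)`, as the kernel of the determinant on `O(d)`. -/
noncomputable def SOg (d : ℕ) : Subgroup ↥(Matrix.orthogonalGroup (Fin d) ℝ) :=
  MonoidHom.ker (detHom d)

lemma pull_sum_aux {α β : Type*} {δ : β → Type*} (sa : Finset α) (sb : Finset β)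
    (t : Finset ℕ) (sd : ∀ k, Finset (δ k))
    (g : α → ℂ) (A : ℂ) (w : β → ℕ → ℂ) (M : ∀ k, ℕ → δ k → ℂ)
    (u : ∀ k, ℕ → δ k → α → ℂ) :
    ∑ x ∈ sa, g x * (A * ∑ k ∈ sb, ∑ r ∈ t, w k r * ∑ j ∈ sd k, M k r j * u k r j x)
      = A * ∑ k ∈ sb, ∑ r ∈ t, w k r * ∑ j ∈ sd k, M k r j * ∑ x ∈ sa, g x * u k r j x := by
  simp only [Finset.mul_sum, Finset.sum_mul]
  rw [Finset.sum_comm]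
  refine Finset.sum_congr rfl fun k _ => ?_
  rw [Finset.sum_comm]
  refine Finset.sum_congr rfl fun r _ => ?_
  rw [Finset.sum_comm]
  refine Finset.sum_congr rfl fun j _ => ?_
  refine Finset.sum_congr rfl fun x _ => ?_
  ring

/-- for unitary representations `ρ, ρ₁, ρ₂` of `SO(d)`, Clebsch–Gordan
blocks `C = C^{(ρ,ρ₁,ρ₂)}` intertwining `ρ₁ ⊗ ρ₂` with `ρ`, reshaped matrices `C̃_m`
with `vec(C̃_m) = (C_{·,m})*`, and a filter `K` whose rows are
`[K(y)]_{m,·} = (1/N) Σ_{ρ₂} Σ_r w_r M_r^{(ρ₂)}(y)ᵀ C̃_m`, steering the filter through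
`ρ₂(R)ᵀ` coincides with conjugating the filter:
`(1/N) Σ_{ρ₂} Σ_r w_r M_r^{(ρ₂)}(y)ᵀ ρ₂(R)ᵀ C̃_m = [ρ(R) K(y) ρ₁(R)†]_{m,·}`. -/
theorem stmt_16 (d : ℕ) {a b : ℕ} {ι : Type*} [Fintype ι] (c : ι → ℕ)
    (ρ : ↥(SOg d) → Matrix (Fin a) (Fin a) ℂ)
    (ρ₁ : ↥(SOg d) → Matrix (Fin b) (Fin b) ℂ)
    (ρ₂ : ∀ k : ι, ↥(SOg d) → Matrix (Fin (c k)) (Fin (c k)) ℂ)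
    (hρ : ∀ R S, ρ (R * S) = ρ R * ρ S)
    (hρ₁ : ∀ R S, ρ₁ (R * S) = ρ₁ R * ρ₁ S)
    (hρ₂ : ∀ k R S, ρ₂ k (R * S) = ρ₂ k R * ρ₂ k S)
    (hρu : ∀ R, ρ R ∈ Matrix.unitaryGroup (Fin a) ℂ)
    (hρ₁u : ∀ R, ρ₁ R ∈ Matrix.unitaryGroup (Fin b) ℂ)
    (hρ₂u : ∀ k R, ρ₂ k R ∈ Matrix.unitaryGroup (Fin (c k)) ℂ)
    (C : ∀ k : ι, Matrix (Fin b × Fin (c k)) (Fin a) ℂ)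
    (hC : ∀ k R, (ρ₁ R ⊗ₖ ρ₂ k R) * C k = C k * ρ R)
    (hCu : ∀ k, (C k)ᴴ * C k = 1)
    (n_r N : ℕ) (w : ι → ℕ → ℂ)
    (M : ∀ k : ι, ℕ → (Fin d → ℤ) → Fin (c k) → ℂ)
    (K : (Fin d → ℤ) → Matrix (Fin a) (Fin b) ℂ)
    (hK : ∀ (y : Fin d → ℤ) (m : Fin a) (i : Fin b),
      K y m i = (1 / (N : ℂ)) * ∑ k : ι, ∑ r ∈ Finset.range n_r,
        w k r * ∑ j : Fin (c k), M k r y j * star (C k (i, j) m)) :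
    ∀ (R : ↥(SOg d)) (y : Fin d → ℤ) (m : Fin a) (i : Fin b),
      (1 / (N : ℂ)) * ∑ k : ι, ∑ r ∈ Finset.range n_r,
          w k r * ∑ j : Fin (c k), ∑ j' : Fin (c k),
            M k r y j * ρ₂ k R j' j * star (C k (i, j') m) =
        (ρ R * K y * (ρ₁ R)ᴴ) m i := by
  intro R y m i
  have hRu : ρ R * (ρ R)ᴴ = 1 := by
    simpa [Matrix.star_eq_conjTranspose] using (Matrix.mem_unitaryGroup_iff.mp (hρu R))
  have key : ∀ k, ((1 : Matrix (Fin b) (Fin b) ℂ) ⊗ₖ (ρ₂ k R)ᴴ) * C k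
      = (ρ₁ R ⊗ₖ (1 : Matrix (Fin (c k)) (Fin (c k)) ℂ)) * C k * (ρ R)ᴴ := by
    intro k
    have h1 : (ρ₂ k R)ᴴ * ρ₂ k R = 1 := by
      simpa [Matrix.star_eq_conjTranspose] using (Matrix.mem_unitaryGroup_iff'.mp (hρ₂u k R))
    have h2 : ((1 : Matrix (Fin b) (Fin b) ℂ) ⊗ₖ (ρ₂ k R)ᴴ) * ((ρ₁ R ⊗ₖ ρ₂ k R) * C k)
        = (ρ₁ R ⊗ₖ (1 : Matrix (Fin (c k)) (Fin (c k)) ℂ)) * C k := by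
      rw [← Matrix.mul_assoc, ← Matrix.mul_kronecker_mul, one_mul, h1]
    rw [hC k R, ← Matrix.mul_assoc] at h2
    rw [← h2, Matrix.mul_assoc, hRu, Matrix.mul_one]
  have keyE : ∀ k (j : Fin (c k)),
      ∑ j', ρ₂ k R j' j * star (C k (i, j') m)
        = ∑ m', ρ R m m' * star (∑ i', ρ₁ R i i' * C k (i', j) m') := by
    intro k j
    have h := congrArg (fun X => star (X (i, j) m)) (key k)
    simp only [Matrix.mul_apply, Matrix.kroneckerMap_apply, Matrix.one_apply,
      Fintype.sum_prod_type, Matrix.conjTranspose_apply, star_sum, star_mul',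
      star_star, ite_mul, one_mul, zero_mul, mul_ite, mul_one, mul_zero,
      apply_ite (star : ℂ → ℂ), star_zero,
      Finset.sum_ite_eq, Finset.sum_ite_eq', Finset.mem_univ, if_true] at h
    simpa [star_sum, star_mul', Finset.mul_sum, mul_comm, mul_left_comm] using h
  -- expand the right-hand side
  have hrhs : (ρ R * K y * (ρ₁ R)ᴴ) m i
      = (1 / (N : ℂ)) * ∑ k : ι, ∑ r ∈ Finset.range n_r,
          w k r * ∑ j : Fin (c k), M k r y j *
            ∑ m', ρ R m m' * ∑ i', star (ρ₁ R i i') * star (C k (i', j) m') := by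
    have e1 : (ρ R * K y * (ρ₁ R)ᴴ) m i
        = ∑ m', ρ R m m' * ∑ i', star (ρ₁ R i i') * K y m' i' := by
      simp only [Matrix.mul_apply, Matrix.conjTranspose_apply, Finset.sum_mul]
      rw [Finset.sum_comm]
      refine Finset.sum_congr rfl fun m' _ => ?_
      rw [Finset.mul_sum]
      refine Finset.sum_congr rfl fun i' _ => ?_
      ring
    rw [e1]
    have e2 : ∀ m', ∑ i', star (ρ₁ R i i') * K y m' i'
        = (1 / (N : ℂ)) * ∑ k : ι, ∑ r ∈ Finset.range n_r,
            w k r * ∑ j : Fin (c k), M k r y j *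
              ∑ i', star (ρ₁ R i i') * star (C k (i', j) m') := by
      intro m'
      have := pull_sum_aux (Finset.univ : Finset (Fin b)) (Finset.univ : Finset ι)
        (Finset.range n_r) (fun k => (Finset.univ : Finset (Fin (c k))))
        (fun i' => star (ρ₁ R i i')) (1 / (N : ℂ)) w (fun k r j => M k r y j)
        (fun k r j i' => star (C k (i', j) m'))
      rw [← this]
      refine Finset.sum_congr rfl fun i' _ => ?_
      rw [hK y m' i']
    simp only [e2]
    have := pull_sum_aux (Finset.univ : Finset (Fin a)) (Finset.univ : Finset ι)
      (Finset.range n_r) (fun k => (Finset.univ : Finset (Fin (c k))))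
      (fun m' => ρ R m m') (1 / (N : ℂ)) w (fun k r j => M k r y j)
      (fun k r j m' => ∑ i', star (ρ₁ R i i') * star (C k (i', j) m'))
    simpa using this
  rw [hrhs]
  congr 1
  refine Finset.sum_congr rfl fun k _ => ?_
  refine Finset.sum_congr rfl fun r _ => ?_
  congr 1
  refine Finset.sum_congr rfl fun j _ => ?_
  rw [show ∑ j' : Fin (c k), M k r y j * ρ₂ k R j' j * star (C k (i, j') m)
      = M k r y j * ∑ j' : Fin (c k), ρ₂ k R j' j * star (C k (i, j') m) by
    rw [Finset.mul_sum]; exact Finset.sum_congr rfl fun j' _ => by ring]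
  rw [keyE k j]
  congr 1
  refine Finset.sum_congr rfl fun m' _ => ?_
  congr 1
  rw [star_sum]
  exact Finset.sum_congr rfl fun i' _ => by rw [star_mul']
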